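/- Let p ∈ [0,1] and l > 0 be real numbers. Then the sum, over all natural numbers n with 0 ≤ n ≤ m and |n/m − p| ≤ l, of C(m,n) p^n (1−p)^(m−n), tends to 1 as m → ∞. (Jakob Bernoulli's theorem: however narrow the limits ±l are chosen, the probability that the observed frequency deviates from p by no more than l can be made arbitrarily close to 1 by sufficiently increasing the number of trials.) -/

import Mathlib

open Polynomial Finset

lemma bern_eval (p : ℝ) (m n : ℕ) :
    Polynomial.eval p (bernsteinPolynomial ℝ m n)
      = (m.choose n : ℝ) * p ^ n * (1 - p) ^ (m - n) := by
  simp [bernsteinPolynomial]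

lemma bern_sum (p : ℝ) (m : ℕ) :
    ∑ n ∈ Finset.range (m + 1), (m.choose n : ℝ) * p ^ n * (1 - p) ^ (m - n) = 1 := by
  have h := congrArg (Polynomial.eval p) (bernsteinPolynomial.sum ℝ m)
  simpa [Polynomial.eval_finset_sum, bern_eval] using h

lemma bern_var (p : ℝ) (m : ℕ) :
    ∑ n ∈ Finset.range (m + 1),
        ((m : ℝ) * p - n) ^ 2 * ((m.choose n : ℝ) * p ^ n * (1 - p) ^ (m - n))
      = m * p * (1 - p) := by
  have h := congrArg (Polynomial.eval p) (bernsteinPolynomial.variance ℝ m)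
  simpa [Polynomial.eval_finset_sum, bern_eval, nsmul_eq_mul] using h

theorem stmt_4 (p : ℝ) (hp : p ∈ Set.Icc (0 : ℝ) 1) (l : ℝ) (hl : 0 < l) :
    Filter.Tendsto (fun m : ℕ =>
        ∑ n ∈ (Finset.range (m + 1)).filter (fun n : ℕ => |(n : ℝ) / m - p| ≤ l),
          (m.choose n : ℝ) * p ^ n * (1 - p) ^ (m - n))
      Filter.atTop (nhds 1) := by
  obtain ⟨hp0, hp1⟩ := hp
  have hq0 : (0:ℝ) ≤ 1 - p := by linarith
  have hterm : ∀ m n : ℕ, 0 ≤ (m.choose n : ℝ) * p ^ n * (1 - p) ^ (m - n) := fun m n => by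
    positivity
  -- squeeze
  have hlo : Filter.Tendsto (fun m : ℕ => 1 - p * (1 - p) / l ^ 2 * (1 / m))
      Filter.atTop (nhds 1) := by
    have := tendsto_one_div_atTop_nhds_zero_nat.const_mul (p * (1 - p) / l ^ 2)
    simpa using (tendsto_const_nhds.sub this)
  refine tendsto_of_tendsto_of_tendsto_of_le_of_le' hlo tendsto_const_nhds ?_ ?_
  · -- lower bound, eventually for m ≥ 1
    filter_upwards [Filter.eventually_ge_atTop 1] with m hm
    have hm0 : (0:ℝ) < m := by exact_mod_cast hm
    have hsplit := Finset.sum_filter_add_sum_filter_not (Finset.range (m+1))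
      (fun n : ℕ => |(n : ℝ) / m - p| ≤ l)
      (fun n => (m.choose n : ℝ) * p ^ n * (1 - p) ^ (m - n))
    have hbad : ∑ n ∈ (Finset.range (m+1)).filter (fun n : ℕ => ¬ |(n : ℝ) / m - p| ≤ l),
        (m.choose n : ℝ) * p ^ n * (1 - p) ^ (m - n) ≤ p * (1 - p) / l ^ 2 * (1 / m) := by
      have step1 : ∀ n ∈ (Finset.range (m+1)).filter (fun n : ℕ => ¬ |(n : ℝ) / m - p| ≤ l),
          (m.choose n : ℝ) * p ^ n * (1 - p) ^ (m - n) ≤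
            (1 / (l ^ 2 * m ^ 2)) * (((m : ℝ) * p - n) ^ 2 *
              ((m.choose n : ℝ) * p ^ n * (1 - p) ^ (m - n))) := by
        intro n hn
        simp only [Finset.mem_filter, not_le] at hn
        have hdist : l < |(n : ℝ) / m - p| := hn.2
        have h1 : l ^ 2 * m ^ 2 ≤ ((m : ℝ) * p - n) ^ 2 := by
          have h2 : l ^ 2 ≤ ((n : ℝ) / m - p) ^ 2 := by
            have := sq_abs ((n : ℝ) / m - p)
            nlinarith [abs_nonneg ((n : ℝ) / m - p)]
          have h3 : ((n : ℝ) / m - p) ^ 2 * m ^ 2 = ((m : ℝ) * p - n) ^ 2 := by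
            field_simp; ring
          nlinarith [sq_nonneg ((n:ℝ)/m - p), sq_nonneg (m:ℝ)]
        have hpos : (0:ℝ) < l ^ 2 * m ^ 2 := by positivity
        have ht := hterm m n
        rw [one_div, ← div_eq_inv_mul, le_div_iff₀ hpos]
        nlinarith
      calc ∑ n ∈ (Finset.range (m+1)).filter (fun n : ℕ => ¬ |(n : ℝ) / m - p| ≤ l),
            (m.choose n : ℝ) * p ^ n * (1 - p) ^ (m - n)
          ≤ ∑ n ∈ (Finset.range (m+1)).filter (fun n : ℕ => ¬ |(n : ℝ) / m - p| ≤ l),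
            (1 / (l ^ 2 * m ^ 2)) * (((m : ℝ) * p - n) ^ 2 *
              ((m.choose n : ℝ) * p ^ n * (1 - p) ^ (m - n))) :=
            Finset.sum_le_sum step1
        _ ≤ ∑ n ∈ Finset.range (m+1),
            (1 / (l ^ 2 * m ^ 2)) * (((m : ℝ) * p - n) ^ 2 *
              ((m.choose n : ℝ) * p ^ n * (1 - p) ^ (m - n))) := by
            apply Finset.sum_le_sum_of_subset_of_nonneg (Finset.filter_subset _ _)
            intro n _ _
            have := hterm m n
            positivity
        _ = (1 / (l ^ 2 * m ^ 2)) * (m * p * (1 - p)) := by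
            rw [← Finset.mul_sum, bern_var]
        _ = p * (1 - p) / l ^ 2 * (1 / m) := by
            field_simp
    have htot := bern_sum p m
    linarith [hsplit.symm ▸ htot]
  · -- upper bound
    filter_upwards with m
    calc ∑ n ∈ (Finset.range (m+1)).filter (fun n : ℕ => |(n : ℝ) / m - p| ≤ l),
          (m.choose n : ℝ) * p ^ n * (1 - p) ^ (m - n)
        ≤ ∑ n ∈ Finset.range (m+1), (m.choose n : ℝ) * p ^ n * (1 - p) ^ (m - n) :=
          Finset.sum_le_sum_of_subset_of_nonneg (Finset.filter_subset _ _)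
            (fun n _ _ => hterm m n)
      _ = 1 := bern_sum p m
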